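/- Let e1, e2 ∈ ℝ^d and k ∈ {1,…,d} with k < d. If an index i satisfies i ∈ TopFeatures(e1;k) and i ∉ TopFeatures(e2;k), then there exists an index j ∉ TopFeatures(e1;k) with |e2_j| ≥ |e2_i|; consequently |e2_i| ≤ max_{j ∉ TopFeatures(e1;k)} |e2_j| = ψ_feat(e2). -/

import Mathlib

open Finset

/-- `rnk x i` is the rank (1-indexed) of `|x i|` among `|x 1|,…,|x d|` in descending
order, ties broken by index: it is the unique bijection `[d] → [d]` with
`rnk x i < rnk x j` iff `|x i| > |x j|`, or `|x i| = |x j|` and `i < j`. -/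
noncomputable def rnk {d : ℕ} (x : Fin d → ℝ) (i : Fin d) : ℕ :=
  (Finset.univ.filter (fun j => |x i| < |x j| ∨ (|x j| = |x i| ∧ j ≤ i))).card

/-- `TopFeatures(x;k)`: indices whose rank is at most `k`. -/
noncomputable def topFeat {d : ℕ} (x : Fin d → ℝ) (k : ℕ) : Finset (Fin d) :=
  Finset.univ.filter (fun i => rnk x i ≤ k)

/-- `sign(t) = 1` if `t ≥ 0`, else `-1`. -/
noncomputable def sgn (t : ℝ) : ℝ := if 0 ≤ t then 1 else -1

/-- Top-`k` feature agreement. -/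
noncomputable def featAgree {d : ℕ} (e1 e2 : Fin d → ℝ) (k : ℕ) : ℝ :=
  ((topFeat e1 k ∩ topFeat e2 k).card : ℝ) / k

/-- Top-`k` rank agreement. -/
noncomputable def rankAgree {d : ℕ} (e1 e2 : Fin d → ℝ) (k : ℕ) : ℝ :=
  (((topFeat e1 k ∩ topFeat e2 k).filter (fun i => rnk e1 i = rnk e2 i)).card : ℝ) / k

/-- Top-`k` sign agreement. -/
noncomputable def signAgree {d : ℕ} (e1 e2 : Fin d → ℝ) (k : ℕ) : ℝ :=
  (((topFeat e1 k ∩ topFeat e2 k).filter (fun i => sgn (e1 i) = sgn (e2 i))).card : ℝ) / k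

/-- Top-`k` signed-rank agreement. -/
noncomputable def signedRankAgree {d : ℕ} (e1 e2 : Fin d → ℝ) (k : ℕ) : ℝ :=
  (((topFeat e1 k ∩ topFeat e2 k).filter
      (fun i => sgn (e1 i) = sgn (e2 i) ∧ rnk e1 i = rnk e2 i)).card : ℝ) / k

/-- `ψ_feat(e2)`: max of `|e2 i|` over `i ∉ TopFeatures(e1;k)` when `k < d`, else `-ε`. -/
noncomputable def psiFeat {d : ℕ} (e1 e2 : Fin d → ℝ) (k : ℕ) (ε : ℝ) : ℝ :=
  if k < d then sSup ((fun i => |e2 i|) '' {i : Fin d | i ∉ topFeat e1 k}) else -ε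

/-- Feature-agreement surrogate loss `ℓ_Ftr(e2; e1, k)`. -/
noncomputable def lossFtr {d : ℕ} (e2 e1 : Fin d → ℝ) (k : ℕ) (ε : ℝ) : ℝ :=
  (∑ i ∈ topFeat e1 k, max 0 (psiFeat e1 e2 k ε - |e2 i| + ε)) / k

/-- `sortD a j` is the `j`-th largest entry of `a` (for `1 ≤ j ≤ d`). -/
noncomputable def sortD {d : ℕ} (a : Fin d → ℝ) (j : ℕ) : ℝ :=
  if h : d - j < d then (a ∘ Tuple.sort a) ⟨d - j, h⟩ else 0

/-- Rank-agreement surrogate loss `ℓ_Rnk(e2; e1, k)`: the sum over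
`I = {(j,i) : j ∈ [k], rank(e1,i) = j}` is realized as the sum over
`i ∈ TopFeatures(e1;k)` with `j = rnk e1 i`. -/
noncomputable def lossRnk {d : ℕ} (e2 e1 : Fin d → ℝ) (k : ℕ) (ε : ℝ) : ℝ :=
  (∑ i ∈ topFeat e1 k,
    max 0 (sortD (Function.update (fun t => |e2 t|) i (-ε)) (rnk e1 i) - |e2 i| + ε)) / k

/-- `ψ_sign(e2)`: max of `|e2 i|` over `i ∉ TopFeatures(e1;k)` when `k < d`, else `0`. -/
noncomputable def psiSign {d : ℕ} (e1 e2 : Fin d → ℝ) (k : ℕ) : ℝ :=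
  if k < d then sSup ((fun i => |e2 i|) '' {i : Fin d | i ∉ topFeat e1 k}) else 0

/-- Sign-agreement surrogate loss `ℓ_Sgn(e2; e1, k)`. -/
noncomputable def lossSgn {d : ℕ} (e2 e1 : Fin d → ℝ) (k : ℕ) (ε : ℝ) : ℝ :=
  (∑ i ∈ topFeat e1 k, max 0 (psiSign e1 e2 k - sgn (e1 i) * e2 i + ε)) / k

/-- Signed-rank-agreement surrogate loss `ℓ_SgnRnk(e2; e1, k)`. -/
noncomputable def lossSgnRnk {d : ℕ} (e2 e1 : Fin d → ℝ) (k : ℕ) (ε : ℝ) : ℝ :=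
  (∑ i ∈ topFeat e1 k,
    max 0 (sortD (Function.update (fun t => |e2 t|) i 0) (rnk e1 i) - sgn (e1 i) * e2 i + ε)) / k

section aux

variable {d : ℕ} (x : Fin d → ℝ)

def Rrel (j i : Fin d) : Prop := |x i| < |x j| ∨ (|x j| = |x i| ∧ j ≤ i)

lemma Rrel_refl (i : Fin d) : Rrel x i i := Or.inr ⟨rfl, le_refl _⟩

lemma Rrel_trans {a b c : Fin d} (h1 : Rrel x a b) (h2 : Rrel x b c) : Rrel x a c := by
  rcases h1 with h1 | ⟨h1, h1'⟩ <;> rcases h2 with h2 | ⟨h2, h2'⟩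
  · exact Or.inl (lt_trans h2 h1)
  · exact Or.inl (h2 ▸ h1)
  · exact Or.inl (h1 ▸ h2)
  · exact Or.inr ⟨h1.trans h2, h1'.trans h2'⟩

lemma Rrel_antisymm {a b : Fin d} (h1 : Rrel x a b) (h2 : Rrel x b a) : a = b := by
  rcases h1 with h1 | ⟨h1, h1'⟩ <;> rcases h2 with h2 | ⟨h2, h2'⟩
  · exact absurd h1 (not_lt.2 h2.le)
  · exact absurd h1 (not_lt.2 h2.ge)
  · exact absurd h2 (not_lt.2 h1.ge)
  · exact le_antisymm h1' h2'

lemma Rrel_total (a b : Fin d) : Rrel x a b ∨ Rrel x b a := by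
  rcases lt_trichotomy (|x a|) (|x b|) with h | h | h
  · exact Or.inr (Or.inl h)
  · rcases le_total a b with h' | h'
    · exact Or.inl (Or.inr ⟨h, h'⟩)
    · exact Or.inr (Or.inr ⟨h.symm, h'⟩)
  · exact Or.inl (Or.inl h)

lemma rnk_lt_rnk {a b : Fin d} (hab : Rrel x a b) (hne : a ≠ b) : rnk x a < rnk x b := by
  apply Finset.card_lt_card
  constructor
  · intro j hj
    simp only [Finset.mem_filter, Finset.mem_univ, true_and] at hj ⊢
    exact Rrel_trans x hj hab
  · intro hsub
    have hb : b ∈ Finset.univ.filter (fun j => |x b| < |x j| ∨ (|x j| = |x b| ∧ j ≤ b)) := by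
      simp [Rrel_refl x b]
    have := hsub hb
    simp only [Finset.mem_filter, Finset.mem_univ, true_and] at this
    exact hne ((Rrel_antisymm x hab this).symm ▸ rfl)

lemma rnk_injective : Function.Injective (rnk x) := by
  intro a b h
  by_contra hne
  rcases Rrel_total x a b with hab | hba
  · exact absurd h (rnk_lt_rnk x hab hne).ne
  · exact absurd h.symm (rnk_lt_rnk x hba (Ne.symm hne)).ne

lemma one_le_rnk (i : Fin d) : 1 ≤ rnk x i := by
  rw [Nat.one_le_iff_ne_zero, ← Nat.pos_iff_ne_zero]
  apply Finset.card_pos.2 ⟨i, by simp⟩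

lemma card_topFeat_le (k : ℕ) : (topFeat x k).card ≤ k := by
  have : (topFeat x k).card ≤ (Finset.Icc 1 k).card := by
    apply Finset.card_le_card_of_injOn (rnk x)
    · intro i hi
      simp only [Finset.mem_coe, topFeat, Finset.mem_filter] at hi
      exact Finset.mem_Icc.2 ⟨one_le_rnk x i, hi.2⟩
    · exact fun a _ b _ h => rnk_injective x h
  simpa using this

end aux

/-- If `i ∈ TopFeatures(e1;k)` but `i ∉ TopFeatures(e2;k)` (with `k < d`), then some
`j ∉ TopFeatures(e1;k)` has `|e2_j| ≥ |e2_i|`; consequently `|e2_i| ≤ ψ_feat(e2)`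
(which for `k < d` does not depend on `ε`). -/
theorem exists_outside_ge_and_le_psiFeat {d : ℕ} (e1 e2 : Fin d → ℝ) (k : ℕ)
    (hk : 1 ≤ k) (hkd : k < d) (i : Fin d)
    (hi1 : i ∈ topFeat e1 k) (hi2 : i ∉ topFeat e2 k) :
    (∃ j : Fin d, j ∉ topFeat e1 k ∧ |e2 i| ≤ |e2 j|) ∧
      ∀ ε : ℝ, |e2 i| ≤ psiFeat e1 e2 k ε := by
  have key : ∃ j : Fin d, j ∉ topFeat e1 k ∧ |e2 i| ≤ |e2 j| := by
    set S := Finset.univ.filter (fun j => |e2 i| < |e2 j| ∨ (|e2 j| = |e2 i| ∧ j ≤ i)) with hS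
    have hcard : k < S.card := by
      simp only [topFeat, Finset.mem_filter, Finset.mem_univ, true_and, not_le] at hi2
      exact hi2
    by_contra hcon
    push_neg at hcon
    have hsub : S ⊆ topFeat e1 k := by
      intro j hj
      by_contra hj'
      simp only [hS, Finset.mem_filter, Finset.mem_univ, true_and] at hj
      have : |e2 i| ≤ |e2 j| := by rcases hj with h | ⟨h, _⟩ <;> [exact h.le; exact h.ge]
      exact absurd this (not_le.2 (hcon j hj'))
    exact absurd (Finset.card_le_card hsub) (by
      have := card_topFeat_le e1 k
      omega)
  refine ⟨key, fun ε => ?_⟩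
  obtain ⟨j, hj, hle⟩ := key
  rw [psiFeat, if_pos hkd]
  refine hle.trans (le_csSup ?_ ⟨j, hj, rfl⟩)
  exact (Set.Finite.image _ (Set.toFinite _)).bddAbove
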